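/- Let G ≤ Sym(Ω) be a finite permutation group with exactly two orbits Ω₁ and Ω₂, both of size at least 2. Suppose no prime divisor of |Ω₁| divides |Ω₂| − 1, and suppose the kernel N₁ of the action of G on Ω₁ acts transitively on Ω₂. Then G contains a derangement on Ω, assuming the Fein–Kantor–Schacher theorem that every nontrivial finite transitive permutation group contains a derangement of prime-power order. -/

import Mathlib

open MulAction Subgroup

/-- Auxiliary: a fixed point of a permutation is fixed by all its powers. -/
private lemma perm_pow_fix {α : Type*} (f : Equiv.Perm α) {x : α} (h : f x = x) (k : ℕ) :
    (f ^ k) x = x := by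
  induction k with
  | zero => rfl
  | succ k ih => rw [pow_succ, Equiv.Perm.mul_apply, h, ih]

/-- Let `G` act on `Ω = Ω₁ ⊔ Ω₂` with exactly two orbits `Ω₁` and `Ω₂` (i.e. `G` is
transitive on each of `Ω₁` and `Ω₂`), both of size at least `2`. Suppose that no prime
divisor of `|Ω₁|` divides `|Ω₂| - 1`, and that the kernel `N₁` of the action of `G` on
`Ω₁` acts transitively on `Ω₂`. Then, assuming the Fein–Kantor–Schacher theorem (every
nontrivial finite transitive permutation group has a derangement of prime-power order),
`G` has a derangement on `Ω`. -/
theorem derangement_of_kernel_transitive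
    (hFKS : ∀ (α : Type) (_ : Fintype α) (P : Subgroup (Equiv.Perm α)),
      1 < Fintype.card α → MulAction.IsPretransitive P α →
        ∃ σ ∈ P, (∀ a : α, σ a ≠ a) ∧ IsPrimePow (orderOf σ))
    (G : Type) [Group G] [Finite G] (Ω₁ Ω₂ : Type) [Fintype Ω₁] [Fintype Ω₂]
    [MulAction G Ω₁] [MulAction G Ω₂]
    [MulAction.IsPretransitive G Ω₁] [MulAction.IsPretransitive G Ω₂]
    (h₁ : 1 < Fintype.card Ω₁) (h₂ : 1 < Fintype.card Ω₂)
    (hprime : ∀ p : ℕ, p.Prime → p ∣ Fintype.card Ω₁ → ¬ p ∣ (Fintype.card Ω₂ - 1))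
    (hN₁ : ∀ y y' : Ω₂, ∃ g : G, (∀ x : Ω₁, g • x = x) ∧ g • y = y') :
    ∃ g : G, (∀ x : Ω₁, g • x ≠ x) ∧ (∀ y : Ω₂, g • y ≠ y) := by
  classical
  have _instG := Fintype.ofFinite G
  by_contra hcon
  push_neg at hcon
  -- hcon : ∀ g, (∀ x, g • x ≠ x) → ∃ y, g • y = y
  set φ : G →* Equiv.Perm Ω₁ := MulAction.toPermHom G Ω₁ with hφdef
  have hφ : ∀ (h : G) (x : Ω₁), φ h x = h • x := fun _ _ => rfl
  -- Step 1: FKS on Ω₁ gives a derangement of prime power order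
  have hPtrans : MulAction.IsPretransitive φ.range Ω₁ := by
    constructor
    intro x y
    obtain ⟨g, hg⟩ := MulAction.exists_smul_eq G x y
    exact ⟨⟨φ g, ⟨g, rfl⟩⟩, hg⟩
  obtain ⟨σ, hσmem, hσder, hσpp⟩ := hFKS Ω₁ _ φ.range h₁ hPtrans
  obtain ⟨g₀, rfl⟩ := hσmem
  obtain ⟨q, b, hq, hb, hqb⟩ := hσpp
  have hqprime : q.Prime := hq.nat_prime
  set n := orderOf g₀ with hn
  have hn0 : n ≠ 0 := (orderOf_pos g₀).ne'
  set c := n.factorization q with hc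
  set m := n / q ^ c with hm
  have hmpos : 0 < m := Nat.ordCompl_pos q hn0
  have hmdvd : m ∣ n := Nat.ordCompl_dvd n q
  have hqm : ¬ q ∣ m := Nat.not_dvd_ordCompl hqprime hn0
  set g := g₀ ^ m with hgdef
  -- order of g is a power of q
  have hog : orderOf g = q ^ c := by
    rw [hgdef, orderOf_pow, ← hn, Nat.gcd_eq_right hmdvd, hm]
    exact Nat.div_div_self (Nat.ordProj_dvd n q) hn0
  -- g is a derangement on Ω₁
  have hmcop : Nat.Coprime m (q ^ b) :=
    Nat.Coprime.pow_right b ((hqprime.coprime_iff_not_dvd.mpr hqm).symm)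
  have htot : 0 < Nat.totient (q ^ b) := Nat.totient_pos.mpr (pow_pos hqprime.pos b)
  have hpow : φ g₀ ^ (m * m ^ (Nat.totient (q ^ b) - 1)) = φ g₀ := by
    have h1 : m * m ^ (Nat.totient (q ^ b) - 1) = m ^ Nat.totient (q ^ b) := by
      rw [← pow_succ']
      congr 1
      omega
    rw [h1]
    have := Nat.ModEq.pow_totient hmcop
    calc φ g₀ ^ m ^ Nat.totient (q ^ b) = φ g₀ ^ 1 := by
          rw [pow_eq_pow_iff_modEq, ← hqb]
          exact this
      _ = φ g₀ := pow_one _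
  have hgder : ∀ x : Ω₁, g • x ≠ x := by
    intro x hx
    have h2 : (φ g₀ ^ m) x = x := by
      rw [← map_pow, ← hgdef, hφ]; exact hx
    have h3 : (φ g₀ ^ (m * m ^ (Nat.totient (q ^ b) - 1))) x = x := by
      rw [pow_mul]
      exact perm_pow_fix _ h2 _
    rw [hpow] at h3
    exact hσder x h3
  -- The kernel K of the action on Ω₁
  set K : Subgroup G := φ.ker with hKdef
  have hKmem : ∀ k : G, k ∈ K ↔ ∀ x : Ω₁, k • x = x := by
    intro k
    rw [hKdef, MonoidHom.mem_ker, Equiv.ext_iff]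
    exact Iff.rfl
  have _instK := Fintype.ofFinite K
  haveI hKtrans : MulAction.IsPretransitive K Ω₂ := by
    constructor
    intro y y'
    obtain ⟨k, hk1, hk2⟩ := hN₁ y y'
    exact ⟨⟨k, (hKmem k).mpr hk1⟩, hk2⟩
  -- every element of the coset g•K has a fixed point on Ω₂ (by hcon)
  have hfib : ∀ k : K, 0 < Fintype.card {y : Ω₂ // (g * (k : G)) • y = y} := by
    intro k
    have hder : ∀ x : Ω₁, (g * (k : G)) • x ≠ x := by
      intro x
      rw [mul_smul, (hKmem (k : G)).mp k.2 x]
      exact hgder x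
    obtain ⟨y, hy⟩ := hcon _ hder
    exact Fintype.card_pos_iff.mpr ⟨⟨y, hy⟩⟩
  -- counting: for each y, the fiber has size |K|/|Ω₂|
  have key : ∀ y : Ω₂, Fintype.card {k : K // (g * (k : G)) • y = y} * Fintype.card Ω₂
      = Fintype.card K := by
    intro y
    obtain ⟨k₀, hk₀⟩ := MulAction.exists_smul_eq K y (g⁻¹ • y)
    have hiff : ∀ k : K, ((g * (k : G)) • y = y) ↔ ((k : G) • y = g⁻¹ • y) := by
      intro k
      rw [mul_smul, smul_eq_iff_eq_inv_smul]
    have e : {k : K // (g * (k : G)) • y = y} ≃ MulAction.stabilizer K y :=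
      { toFun := fun k => ⟨k₀⁻¹ * k.1, by
          have hk : (k.1 : G) • y = g⁻¹ • y := (hiff k.1).mp k.2
          have hk₀' : (k₀ : G) • y = g⁻¹ • y := hk₀
          show ((k₀ : G)⁻¹ * (k.1 : G)) • y = y
          rw [mul_smul, hk, ← hk₀', inv_smul_smul]⟩
        invFun := fun s => ⟨k₀ * s.1, by
          refine (hiff (k₀ * s.1)).mpr ?_
          have hk₀' : (k₀ : G) • y = g⁻¹ • y := hk₀
          have hs : (s.1 : G) • y = y := s.2
          show ((k₀ : G) * (s.1 : G)) • y = g⁻¹ • y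
          rw [mul_smul, hs]
          exact hk₀'⟩
        left_inv := fun k => by simp
        right_inv := fun s => by simp }
    rw [Fintype.card_congr e]
    have h1 : (MulAction.stabilizer K y).index = Nat.card Ω₂ :=
      MulAction.index_stabilizer_of_transitive K y
    have h2 : Nat.card (MulAction.stabilizer K y) * (MulAction.stabilizer K y).index
        = Nat.card K := Subgroup.card_mul_index _
    rw [h1] at h2
    simpa [Nat.card_eq_fintype_card] using h2
  -- summing the fibers over K
  have hsum : ∑ k : K, Fintype.card {y : Ω₂ // (g * (k : G)) • y = y} = Fintype.card K := by
    have e1 : {p : K × Ω₂ // (g * (p.1 : G)) • p.2 = p.2}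
        ≃ Σ k : K, {y : Ω₂ // (g * (k : G)) • y = y} :=
      Equiv.subtypeProdEquivSigmaSubtype (fun (k : K) (y : Ω₂) => (g * (k : G)) • y = y)
    have e2 : {p : K × Ω₂ // (g * (p.1 : G)) • p.2 = p.2}
        ≃ {p : Ω₂ × K // (g * (p.2 : G)) • p.1 = p.1} :=
      (Equiv.prodComm K Ω₂).subtypeEquiv (fun p => Iff.rfl)
    have e3 : {p : Ω₂ × K // (g * (p.2 : G)) • p.1 = p.1}
        ≃ Σ y : Ω₂, {k : K // (g * (k : G)) • y = y} :=
      Equiv.subtypeProdEquivSigmaSubtype (fun (y : Ω₂) (k : K) => (g * (k : G)) • y = y)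
    have hcard1 : ∑ k : K, Fintype.card {y : Ω₂ // (g * (k : G)) • y = y}
        = ∑ y : Ω₂, Fintype.card {k : K // (g * (k : G)) • y = y} := by
      rw [← Fintype.card_sigma, ← Fintype.card_sigma,
        Fintype.card_congr (e1.symm.trans (e2.trans e3))]
    rw [hcard1]
    have hΩ₂pos : 0 < Fintype.card Ω₂ := by omega
    refine Nat.eq_of_mul_eq_mul_right hΩ₂pos ?_
    rw [Finset.sum_mul]
    calc ∑ y : Ω₂, Fintype.card {k : K // (g * (k : G)) • y = y} * Fintype.card Ω₂
        = ∑ _y : Ω₂, Fintype.card K := Finset.sum_congr rfl (fun y _ => key y)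
      _ = Fintype.card Ω₂ * Fintype.card K := by
          rw [Finset.sum_const, Finset.card_univ, smul_eq_mul]
      _ = Fintype.card K * Fintype.card Ω₂ := mul_comm _ _
  -- hence every fiber has size exactly one; in particular that of k = 1
  have hall : ∀ k : K, 1 = Fintype.card {y : Ω₂ // (g * (k : G)) • y = y} := by
    have hle : ∀ k : K, k ∈ Finset.univ → 1 ≤ Fintype.card {y : Ω₂ // (g * (k : G)) • y = y} :=
      fun k _ => hfib k
    have hsums : ∑ k : K, (1 : ℕ) = ∑ k : K, Fintype.card {y : Ω₂ // (g * (k : G)) • y = y} := by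
      rw [hsum]; simp
    intro k
    exact (Finset.sum_eq_sum_iff_of_le hle).mp hsums k (Finset.mem_univ k)
  have hone : Fintype.card {y : Ω₂ // g • y = y} = 1 := by
    have := hall 1
    simp only [OneMemClass.coe_one, mul_one] at this
    omega
  -- the cyclic group generated by g is a q-group
  have hpg : IsPGroup q (Subgroup.zpowers g) :=
    IsPGroup.of_card (by rw [Nat.card_zpowers, hog])
  -- fixed points of ⟨g⟩ on Ω₂ form a single point
  have hfix2 : MulAction.fixedPoints (Subgroup.zpowers g) Ω₂ = {y : Ω₂ | g • y = y} := by
    ext y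
    constructor
    · intro h
      exact h ⟨g, Subgroup.mem_zpowers g⟩
    · intro hy h
      have hsub : Subgroup.zpowers g ≤ MulAction.stabilizer G y :=
        Subgroup.zpowers_le.mpr hy
      exact hsub h.2
  have hfix1 : MulAction.fixedPoints (Subgroup.zpowers g) Ω₁ = (∅ : Set Ω₁) := by
    ext x
    simp only [Set.mem_empty_iff_false, iff_false]
    intro h
    exact hgder x (h ⟨g, Subgroup.mem_zpowers g⟩)
  -- mod-q congruences
  haveI : Fact q.Prime := ⟨hqprime⟩
  have hmod2 : Nat.card Ω₂ ≡ Nat.card (MulAction.fixedPoints (Subgroup.zpowers g) Ω₂) [MOD q] :=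
    hpg.card_modEq_card_fixedPoints Ω₂
  have hmod1 : Nat.card Ω₁ ≡ Nat.card (MulAction.fixedPoints (Subgroup.zpowers g) Ω₁) [MOD q] :=
    hpg.card_modEq_card_fixedPoints Ω₁
  rw [hfix2] at hmod2
  rw [hfix1] at hmod1
  have hc1 : Nat.card {y : Ω₂ | g • y = y} = 1 := by
    rw [Nat.card_eq_fintype_card]
    exact (Fintype.card_congr (Equiv.refl _)).trans hone
  have hc0 : Nat.card (∅ : Set Ω₁) = 0 := by simp
  rw [hc1] at hmod2
  rw [hc0] at hmod1
  have hdvd1 : q ∣ Fintype.card Ω₁ := by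
    have := (Nat.modEq_zero_iff_dvd).mp hmod1
    rwa [Nat.card_eq_fintype_card] at this
  have hdvd2 : q ∣ Fintype.card Ω₂ - 1 := by
    rw [Nat.card_eq_fintype_card] at hmod2
    exact (Nat.modEq_iff_dvd' (by omega)).mp hmod2.symm
  exact hprime q hqprime hdvd1 hdvd2
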